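/- Let (G, d) be a group with a bi-invariant metric d. Suppose that for some a, b ∈ G and some a₁, b₁, …, a_n, b_n ∈ G with a = a₁·…·a_n and b = b₁·…·b_n we have d(a, b) = d(a₁, b₁) + … + d(a_n, b_n). Then for any 1 ≤ i ≤ j ≤ n we have d(a_i·…·a_j, b_i·…·b_j) = d(a_i, b_i) + … + d(a_j, b_j). -/

import Mathlib

/-- `d : α → α → ℝ` is a metric on `α`. -/
def IsMetricFun {α : Type*} (d : α → α → ℝ) : Prop :=
  (∀ x y, d x y = 0 ↔ x = y) ∧ (∀ x y, d x y = d y x) ∧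
    ∀ x y z, d x z ≤ d x y + d y z

/-- `d` is a bi-invariant metric on the group `G`. -/
def IsBiInvMetric {G : Type*} [Group G] (d : G → G → ℝ) : Prop :=
  IsMetricFun d ∧ (∀ g x y : G, d (g * x) (g * y) = d x y) ∧
    ∀ g x y : G, d (x * g) (y * g) = d x y

lemma pair_le {G : Type} [Group G] (d : G → G → ℝ) (hd : IsBiInvMetric d)
    (a b p q : G) : d (a * p) (b * q) ≤ d a b + d p q := by
  calc d (a * p) (b * q) ≤ d (a * p) (b * p) + d (b * p) (b * q) := hd.1.2.2 _ _ _
    _ = d a b + d p q := by rw [hd.2.2, hd.2.1]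

lemma sub_le {G : Type} [Group G] (d : G → G → ℝ) (hd : IsBiInvMetric d) :
    ∀ l₁ l₂ : List G, l₁.length = l₂.length →
      d l₁.prod l₂.prod ≤ (List.zipWith d l₁ l₂).sum := by
  intro l₁
  induction l₁ with
  | nil =>
    intro l₂ hlen
    rw [List.length_nil] at hlen
    rw [List.eq_nil_of_length_eq_zero hlen.symm]
    simp [(hd.1.1 1 1).mpr rfl]
  | cons a t ih =>
    intro l₂ hlen
    cases l₂ with
    | nil => simp at hlen
    | cons b t₂ =>
      simp only [List.prod_cons, List.zipWith_cons_cons, List.sum_cons]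
      have := pair_le d hd a b t.prod t₂.prod
      have h2 := ih t₂ (by simpa using hlen)
      linarith

/-- Let `d` be a bi-invariant metric on a group `G`.  If
`a = a₁⋯aₙ`, `b = b₁⋯bₙ` (encoded as lists `l₁`, `l₂` of the same length) satisfy
`d a b = d a₁ b₁ + ⋯ + d aₙ bₙ`, then for every contiguous segment (starting after position `i`
and of length `k`) the corresponding equality
`d (aᵢ₊₁⋯aᵢ₊ₖ) (bᵢ₊₁⋯bᵢ₊ₖ) = d aᵢ₊₁ bᵢ₊₁ + ⋯ + d aᵢ₊ₖ bᵢ₊ₖ` holds. -/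
theorem biinv_metric_additive_on_segments {G : Type} [Group G]
    (d : G → G → ℝ) (hd : IsBiInvMetric d)
    (l₁ l₂ : List G) (hlen : l₁.length = l₂.length)
    (h : d l₁.prod l₂.prod = (List.zipWith d l₁ l₂).sum) :
    ∀ i k : ℕ,
      d ((l₁.drop i).take k).prod ((l₂.drop i).take k).prod =
        (List.zipWith d ((l₁.drop i).take k) ((l₂.drop i).take k)).sum := by
  intro i k
  set P₁ := l₁.take i with hP₁
  set S₁ := (l₁.drop i).take k with hS₁
  set T₁ := (l₁.drop i).drop k with hT₁
  set P₂ := l₂.take i with hP₂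
  set S₂ := (l₂.drop i).take k with hS₂
  set T₂ := (l₂.drop i).drop k with hT₂
  have e₁ : l₁ = P₁ ++ (S₁ ++ T₁) := by
    rw [hP₁, hS₁, hT₁, List.take_append_drop, List.take_append_drop]
  have e₂ : l₂ = P₂ ++ (S₂ ++ T₂) := by
    rw [hP₂, hS₂, hT₂, List.take_append_drop, List.take_append_drop]
  have lP : P₁.length = P₂.length := by simp [hP₁, hP₂, hlen]
  have lS : S₁.length = S₂.length := by simp [hS₁, hS₂, hlen]
  have hzip : (List.zipWith d l₁ l₂).sum =
      (List.zipWith d P₁ P₂).sum + ((List.zipWith d S₁ S₂).sum + (List.zipWith d T₁ T₂).sum) := by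
    rw [e₁, e₂, List.zipWith_append lP, List.zipWith_append lS]
    simp
  have hprod : d l₁.prod l₂.prod ≤
      d P₁.prod P₂.prod + (d S₁.prod S₂.prod + d T₁.prod T₂.prod) := by
    rw [e₁, e₂, List.prod_append, List.prod_append, List.prod_append, List.prod_append]
    calc d (P₁.prod * (S₁.prod * T₁.prod)) (P₂.prod * (S₂.prod * T₂.prod))
        ≤ d P₁.prod P₂.prod + d (S₁.prod * T₁.prod) (S₂.prod * T₂.prod) :=
          pair_le d hd _ _ _ _
      _ ≤ d P₁.prod P₂.prod + (d S₁.prod S₂.prod + d T₁.prod T₂.prod) := by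
          have := pair_le d hd S₁.prod S₂.prod T₁.prod T₂.prod
          linarith
  have hP := sub_le d hd P₁ P₂ lP
  have hS := sub_le d hd S₁ S₂ lS
  have hT := sub_le d hd T₁ T₂ (by simp [hT₁, hT₂, hlen])
  rw [h, hzip] at hprod
  linarith
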